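/- Let G be a simple graph on a countable vertex set, let M be a perfect matching of G, and let W be an independent subgraph of G. Then there is no edge {s, v} ∈ M with s ∈ V \ W and v ∈ W. -/

import Mathlib

namespace PaperMatchings

variable {V : Type*}

/-- The support of a set of edges: all vertices incident to some edge in `M`. -/
def supp (M : Set (Sym2 V)) : Set V := {v | ∃ e ∈ M, v ∈ e}

/-- `M` is a matching of `G`: a set of edges of `G` such that no vertex is
incident to more than one edge of `M`. -/
def IsMatching (G : SimpleGraph V) (M : Set (Sym2 V)) : Prop :=
  M ⊆ G.edgeSet ∧ ∀ (v : V), ∀ e ∈ M, ∀ e' ∈ M, v ∈ e → v ∈ e' → e = e'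

/-- A perfect matching: a matching whose support is all of `V`. -/
def IsPerfectMatching (G : SimpleGraph V) (M : Set (Sym2 V)) : Prop :=
  IsMatching G M ∧ supp M = Set.univ

/-- A (finite or infinite) path in `G`, given by its number of vertices `n : ℕ∞`
(`⊤` meaning infinite) and the enumeration `f` of its vertices: it is injective on
indices below `n` and consecutive vertices are adjacent. -/
def IsPath (G : SimpleGraph V) (n : ℕ∞) (f : ℕ → V) : Prop :=
  1 ≤ n ∧
  (∀ i j : ℕ, (i : ℕ∞) < n → (j : ℕ∞) < n → f i = f j → i = j) ∧
  (∀ i : ℕ, ((i : ℕ∞) + 1) < n → G.Adj (f i) (f (i + 1)))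

/-- The consecutive edges of the path lie alternately in `M` and outside `M`. -/
def IsAlternating (M : Set (Sym2 V)) (n : ℕ∞) (f : ℕ → V) : Prop :=
  ∀ i : ℕ, ((i : ℕ∞) + 2) < n →
    (s(f i, f (i + 1)) ∈ M ↔ s(f (i + 1), f (i + 2)) ∉ M)

/-- An `M`-augmenting path starting at `s`: an `M`-alternating path (with at least one
edge) starting at the unmatched vertex `s`, which is either infinite or ends at an
unmatched vertex. -/
def IsAugmentingPath (G : SimpleGraph V) (M : Set (Sym2 V)) (n : ℕ∞) (f : ℕ → V)
    (s : V) : Prop :=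
  IsPath G n f ∧ IsAlternating M n f ∧ 1 < n ∧ f 0 = s ∧ s ∉ supp M ∧
  ∀ k : ℕ, n = (k : ℕ∞) + 1 → f k ∉ supp M

/-- The path contains at least one edge of `M`. -/
def IsProper (M : Set (Sym2 V)) (n : ℕ∞) (f : ℕ → V) : Prop :=
  ∃ i : ℕ, ((i : ℕ∞) + 1) < n ∧ s(f i, f (i + 1)) ∈ M

/-- Condition (A): for every matching `M` and every vertex `s` not in the support
of `M` there is an `M`-augmenting path starting at `s`. -/
def ConditionA (G : SimpleGraph V) : Prop :=
  ∀ M : Set (Sym2 V), IsMatching G M → ∀ s : V, s ∉ supp M →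
    ∃ (n : ℕ∞) (f : ℕ → V), IsAugmentingPath G M n f s

/-- An independent matching: a matching admitting no proper augmenting path. -/
def IndepMatching (G : SimpleGraph V) (M : Set (Sym2 V)) : Prop :=
  IsMatching G M ∧
    ¬ ∃ (s : V) (n : ℕ∞) (f : ℕ → V), IsAugmentingPath G M n f s ∧ IsProper M n f

/-- The induced subgraph of `G` on the vertex set `S` (vertices outside `S`
become isolated). -/
def restrict (G : SimpleGraph V) (S : Set V) : SimpleGraph V where
  Adj u v := G.Adj u v ∧ u ∈ S ∧ v ∈ S
  symm := by
    constructor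
    intro u v h
    exact ⟨h.1.symm, h.2.2, h.2.1⟩
  loopless := by
    constructor
    intro v h
    exact G.irrefl h.1

/-- `W` is an independent subgraph of `G`: the induced subgraph `G[W]` has a perfect
matching (i.e. `G` has a matching with support exactly `W`) and every such matching
is an independent matching of `G`. -/
def IndepSubgraph (G : SimpleGraph V) (W : Set V) : Prop :=
  (∃ M, IsMatching G M ∧ supp M = W) ∧
  ∀ M, IsMatching G M → supp M = W → IndepMatching G M

/-- The induced subgraph `G[W]` satisfies condition (A): for every matching of
`G[W]` and every vertex of `W` not in its support, there is an augmenting path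
inside `G[W]`. -/
def ConditionAOn (G : SimpleGraph V) (W : Set V) : Prop :=
  ∀ M : Set (Sym2 V), IsMatching (restrict G W) M → ∀ s ∈ W, s ∉ supp M →
    ∃ (n : ℕ∞) (f : ℕ → V), IsAugmentingPath (restrict G W) M n f s


open Classical in
noncomputable def partner (M : Set (Sym2 V)) (v : V) : V :=
  if h : ∃ w, s(v, w) ∈ M then h.choose else v

lemma partner_mem {M : Set (Sym2 V)} {v : V} (h : ∃ w, s(v, w) ∈ M) :
    s(v, partner M v) ∈ M := by
  rw [partner, dif_pos h]; exact h.choose_spec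

lemma mem_supp_iff {M : Set (Sym2 V)} {v : V} : v ∈ supp M ↔ ∃ w, s(v, w) ∈ M := by
  constructor
  · rintro ⟨e, heM, hve⟩
    exact ⟨Sym2.Mem.other hve, by rwa [Sym2.other_spec hve]⟩
  · rintro ⟨w, hw⟩
    exact ⟨s(v, w), hw, Sym2.mem_mk_left v w⟩

lemma partner_eq {G : SimpleGraph V} {M : Set (Sym2 V)} (hM : IsMatching G M)
    {v w : V} (h : s(v, w) ∈ M) : partner M v = w := by
  have h1 : s(v, partner M v) ∈ M := partner_mem ⟨w, h⟩
  have h2 := hM.2 v _ h1 _ h (Sym2.mem_mk_left _ _) (Sym2.mem_mk_left _ _)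
  exact Sym2.congr_right.mp h2

lemma partner_rev {G : SimpleGraph V} {M : Set (Sym2 V)} (hM : IsMatching G M)
    {v w : V} (h : s(v, w) ∈ M) : partner M w = v :=
  partner_eq hM (by rwa [Sym2.eq_swap] at h)

lemma edge_ne {G : SimpleGraph V} {M : Set (Sym2 V)} (hM : IsMatching G M)
    {v w : V} (h : s(v, w) ∈ M) : v ≠ w :=
  ((SimpleGraph.mem_edgeSet G).mp (hM.1 h)).ne

noncomputable def altpath (M N : Set (Sym2 V)) (s : V) : ℕ → V
  | 0 => s
  | (i+1) => if i % 2 = 0 then partner M (altpath M N s i) else partner N (altpath M N s i)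

lemma altpath_odd (M N : Set (Sym2 V)) (s : V) (k : ℕ) :
    altpath M N s (2*k+1) = partner M (altpath M N s (2*k)) := by
  show (if (2*k) % 2 = 0 then _ else _) = _
  simp [Nat.mul_mod_right]

lemma altpath_even (M N : Set (Sym2 V)) (s : V) (k : ℕ) :
    altpath M N s (2*k+2) = partner N (altpath M N s (2*k+1)) := by
  show (if (2*k+1) % 2 = 0 then _ else _) = _
  simp [Nat.mul_add_mod]


section Core
variable {G : SimpleGraph V} {M N : Set (Sym2 V)} {W : Set V} {s : V}

/-- With `M` perfect, each even-indexed edge of the path lies in `M`. -/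
lemma altpath_edgeM (hM : IsMatching G M) (hMs : supp M = Set.univ) (k : ℕ) :
    s(altpath M N s (2*k), altpath M N s (2*k+1)) ∈ M := by
  rw [altpath_odd]
  exact partner_mem (mem_supp_iff.mp (hMs ▸ Set.mem_univ _))

lemma altpath_edgeN (hsupp : supp N = W) (k : ℕ)
    (hW : altpath M N s (2*k+1) ∈ W) :
    s(altpath M N s (2*k+1), altpath M N s (2*k+2)) ∈ N := by
  rw [altpath_even]
  exact partner_mem (mem_supp_iff.mp (hsupp ▸ hW))

lemma altpath_backM (hM : IsMatching G M) (hMs : supp M = Set.univ) (k : ℕ) :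
    partner M (altpath M N s (2*k+1)) = altpath M N s (2*k) :=
  partner_rev hM (altpath_edgeM hM hMs k)

lemma altpath_backN (hN : IsMatching G N) (hsupp : supp N = W) (k : ℕ)
    (hW : altpath M N s (2*k+1) ∈ W) :
    partner N (altpath M N s (2*k+2)) = altpath M N s (2*k+1) :=
  partner_rev hN (altpath_edgeN hsupp k hW)

lemma altpath_inj (hM : IsMatching G M) (hMs : supp M = Set.univ)
    (hN : IsMatching G N) (hsupp : supp N = W) (hsW : s ∉ W) :
    ∀ b, (∀ j, 2*j+1 < b → altpath M N s (2*j+1) ∈ W) →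
      ∀ a < b, altpath M N s a ≠ altpath M N s b := by
  intro b
  induction b using Nat.strong_induction_on with
  | _ b IH =>
  intro halive a hab heq
  set f := altpath M N s with hf
  rcases Nat.even_or_odd b with hbe | hbo
  · -- b even, so b = 2c+2 (b > a ≥ 0)
    obtain ⟨c, hc⟩ : ∃ c, b = 2*c+2 := by
      obtain ⟨r, hr⟩ := hbe; exact ⟨r - 1, by omega⟩
    subst hc
    have halive' : f (2*c+1) ∈ W := halive c (by omega)
    have hedge : s(f (2*c+1), f (2*c+2)) ∈ N := altpath_edgeN hsupp c halive'
    have hback : partner N (f (2*c+2)) = f (2*c+1) := altpath_backN hN hsupp c halive'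
    rcases Nat.eq_zero_or_pos a with rfl | hapos
    · -- a = 0 : s would be in supp N = W
      apply hsW
      rw [← hsupp]
      refine ⟨s(f (2*c+1), f (2*c+2)), hedge, ?_⟩
      have : (s : V) = f (2*c+2) := heq
      rw [this]; exact Sym2.mem_mk_right _ _
    rcases Nat.even_or_odd a with hae | hao
    · -- a even positive: a = 2j+2
      obtain ⟨j, hj⟩ : ∃ j, a = 2*j+2 := by
        obtain ⟨r, hr⟩ := hae; exact ⟨r - 1, by omega⟩
      subst hj
      have hja : f (2*j+1) ∈ W := halive j (by omega)
      have hbackA : partner N (f (2*j+2)) = f (2*j+1) := altpath_backN hN hsupp j hja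
      have key : f (2*j+1) = f (2*c+1) := by
        rw [← hbackA, ← hback, heq]
      exact IH (2*c+1) (by omega) (fun j' hj' => halive j' (by omega)) (2*j+1)
        (by omega) key
    · -- a odd: a = 2j+1
      obtain ⟨j, hj⟩ := hao
      subst hj
      rcases eq_or_lt_of_le (Nat.succ_le_of_lt hab) with hab' | hab'
      · -- a + 1 = b: adjacent vertices equal, impossible
        have : 2*j+1 = 2*c+1 := by omega
        rw [this] at heq
        exact edge_ne hN hedge heq
      · have hstep : f (2*j+2) = partner N (f (2*j+1)) := altpath_even M N s j
        have key : f (2*j+2) = f (2*c+1) := by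
          rw [hstep, heq, hback]
        exact IH (2*c+1) (by omega) (fun j' hj' => halive j' (by omega)) (2*j+2)
          (by omega) key
  · -- b odd: b = 2k+1
    obtain ⟨k, hk⟩ := hbo
    subst hk
    have hback : partner M (f (2*k+1)) = f (2*k) := altpath_backM hM hMs k
    rcases Nat.even_or_odd a with hae | hao
    · -- a even: a = 2j
      obtain ⟨j, hj⟩ : ∃ j, a = 2*j := by obtain ⟨r, hr⟩ := hae; exact ⟨r, by omega⟩
      subst hj
      rcases eq_or_lt_of_le (Nat.succ_le_of_lt hab) with hab' | hab'
      · have : 2*j = 2*k := by omega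
        rw [this] at heq
        exact edge_ne hM (altpath_edgeM hM hMs k) heq
      · have hstep : f (2*j+1) = partner M (f (2*j)) := altpath_odd M N s j
        have key : f (2*j+1) = f (2*k) := by rw [hstep, heq, hback]
        exact IH (2*k) (by omega) (fun j' hj' => halive j' (by omega)) (2*j+1)
          (by omega) key
    · -- a odd: a = 2j+1
      obtain ⟨j, hj⟩ := hao
      subst hj
      have hbackA : partner M (f (2*j+1)) = f (2*j) := altpath_backM hM hMs j
      have key : f (2*j) = f (2*k) := by rw [← hbackA, ← hback, heq]
      exact IH (2*k) (by omega) (fun j' hj' => halive j' (by omega)) (2*j)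
        (by omega) key

lemma altpath_evenEdge_notN (hM : IsMatching G M) (hMs : supp M = Set.univ)
    (hN : IsMatching G N) (hsupp : supp N = W) (hsW : s ∉ W) (k : ℕ)
    (halive : ∀ j, j < k → altpath M N s (2*j+1) ∈ W) :
    s(altpath M N s (2*k), altpath M N s (2*k+1)) ∉ N := by
  intro h
  set f := altpath M N s with hf
  rcases Nat.eq_zero_or_pos k with rfl | hkpos
  · -- k = 0 : s would be in supp N = W
    apply hsW
    rw [← hsupp]
    exact ⟨s(f 0, f 1), by simpa using h, Sym2.mem_mk_left _ _⟩
  obtain ⟨c, rfl⟩ : ∃ c, k = c + 1 := ⟨k - 1, by omega⟩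
  have e1 : 2*(c+1) = 2*c+2 := by ring
  rw [e1, show 2*c+2+1 = 2*c+3 from by omega] at h
  have hedge : s(f (2*c+1), f (2*c+2)) ∈ N :=
    altpath_edgeN hsupp c (halive c (by omega))
  have heq := hN.2 (f (2*c+2)) _ hedge _ h (Sym2.mem_mk_right _ _) (Sym2.mem_mk_left _ _)
  rcases Sym2.eq_iff.mp heq with ⟨h1, _⟩ | ⟨h1, _⟩
  · exact edge_ne hN hedge h1
  · exact altpath_inj hM hMs hN hsupp hsW (2*c+3)
      (fun j hj => halive j (by omega)) (2*c+1) (by omega) h1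

end Core

/-- A perfect matching has no edge from the complement of an
independent subgraph `W` into `W`. -/
theorem no_perfect_matching_edge_into_indepSubgraph {V : Type*} [Countable V]
    (G : SimpleGraph V) (M : Set (Sym2 V)) (hM : IsPerfectMatching G M)
    (W : Set V) (hW : IndepSubgraph G W) :
    ∀ s v : V, s(s, v) ∈ M → s ∉ W → v ∉ W := by
  intro s v hsv hsW hvW
  obtain ⟨⟨N, hNm, hsupp⟩, hAll⟩ := hW
  have hIndep := hAll N hNm hsupp
  obtain ⟨hMm, hMs⟩ := hM
  set f := altpath M N s with hf
  have hf0 : f 0 = s := rfl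
  have hf1 : f 1 = v := by
    have h01 : f (2*0+1) = partner M (f (2*0)) := altpath_odd M N s 0
    norm_num at h01
    rw [h01]
    exact partner_eq hMm hsv
  have hsnsupp : s ∉ supp N := fun h => hsW (hsupp ▸ h)
  have hadjM : ∀ j : ℕ, G.Adj (f (2*j)) (f (2*j+1)) := fun j =>
    (SimpleGraph.mem_edgeSet G).mp (hMm.1 (altpath_edgeM hMm hMs j))
  have hadjN : ∀ j : ℕ, f (2*j+1) ∈ W → G.Adj (f (2*j+1)) (f (2*j+2)) := fun j hj =>
    (SimpleGraph.mem_edgeSet G).mp (hNm.1 (altpath_edgeN hsupp j hj))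
  apply hIndep.2
  by_cases hA : ∀ k, f (2*k+1) ∈ W
  · -- infinite augmenting path
    refine ⟨s, ⊤, f, ⟨⟨le_top, ?_, ?_⟩, ?_, ?_, hf0, hsnsupp, ?_⟩, ?_⟩
    · -- injective
      intro i j _ _ hij
      by_contra hne
      rcases lt_trichotomy i j with h | h | h
      · exact altpath_inj hMm hMs hNm hsupp hsW j (fun j' _ => hA j') i h hij
      · exact hne h
      · exact altpath_inj hMm hMs hNm hsupp hsW i (fun j' _ => hA j') j h hij.symm
    · -- adjacency
      intro i _
      rcases Nat.even_or_odd i with ⟨j, rfl⟩ | ⟨j, rfl⟩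
      · rw [show j + j = 2*j from by ring]
        exact hadjM j
      · rw [show 2*j+1+1 = 2*j+2 from by omega]
        exact hadjN j (hA j)
    · -- alternating
      intro i _
      rcases Nat.even_or_odd i with ⟨j, rfl⟩ | ⟨j, rfl⟩
      · rw [show j + j = 2*j from by ring]
        exact iff_of_false
          (altpath_evenEdge_notN hMm hMs hNm hsupp hsW j (fun j' _ => hA j'))
          (not_not_intro (altpath_edgeN hsupp j (hA j)))
      · have h2 : s(f (2*(j+1)), f (2*(j+1)+1)) ∉ N :=
          altpath_evenEdge_notN hMm hMs hNm hsupp hsW (j+1) (fun j' _ => hA j')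
        rw [show 2*(j+1) = 2*j+2 from by ring] at h2
        rw [show 2*j+1+1 = 2*j+2 from by omega, show 2*j+1+2 = 2*j+2+1 from by omega]
        exact iff_of_true (altpath_edgeN hsupp j (hA j)) h2
    · exact lt_top_iff_ne_top.mpr (by rw [show ((1:ℕ∞)) = ((1:ℕ):ℕ∞) from by push_cast; ring]; exact ENat.coe_ne_top _)
    · intro k hk
      rw [show ((k:ℕ∞)+1) = ((k+1:ℕ):ℕ∞) from by push_cast; ring] at hk
      exact absurd hk.symm (ENat.coe_ne_top _)
    · -- proper
      refine ⟨1, ?_, ?_⟩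
      · have hc2 : ((1:ℕ):ℕ∞) + 1 = ((2:ℕ):ℕ∞) := by push_cast; ring
        rw [hc2]
        exact lt_top_iff_ne_top.mpr (ENat.coe_ne_top _)
      have h := altpath_edgeN hsupp 0 (hA 0)
      norm_num at h
      exact h
  · -- finite augmenting path
    push_neg at hA
    classical
    set k0 := Nat.find hA with hk0def
    have hk0 : f (2*k0+1) ∉ W := Nat.find_spec hA
    have hmin : ∀ j, j < k0 → f (2*j+1) ∈ W := fun j hj => by
      by_contra hc
      exact Nat.find_min hA hj hc
    have hk0pos : 0 < k0 := by
      rcases Nat.eq_zero_or_pos k0 with h | h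
      · exfalso
        apply hk0
        rw [h]
        norm_num
        rw [hf1]
        exact hvW
      · exact h
    refine ⟨s, ((2*k0+2 : ℕ) : ℕ∞), f, ⟨⟨?_, ?_, ?_⟩, ?_, ?_, hf0, hsnsupp, ?_⟩, ?_⟩
    · exact_mod_cast Nat.one_le_iff_ne_zero.mpr (by omega)
    · -- injective
      intro i j hi hj hij
      rw [Nat.cast_lt] at hi hj
      by_contra hne
      rcases lt_trichotomy i j with h | h | h
      · exact altpath_inj hMm hMs hNm hsupp hsW j
          (fun j' hj' => hmin j' (by omega)) i h hij
      · exact hne h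
      · exact altpath_inj hMm hMs hNm hsupp hsW i
          (fun j' hj' => hmin j' (by omega)) j h hij.symm
    · -- adjacency
      intro i hi
      rw [show ((i:ℕ∞)+1) = ((i+1:ℕ):ℕ∞) from by push_cast; ring, Nat.cast_lt] at hi
      rcases Nat.even_or_odd i with ⟨j, rfl⟩ | ⟨j, rfl⟩
      · rw [show j + j = 2*j from by ring]
        exact hadjM j
      · rw [show 2*j+1+1 = 2*j+2 from by omega]
        exact hadjN j (hmin j (by omega))
    · -- alternating
      intro i hi
      rw [show ((i:ℕ∞)+2) = ((i+2:ℕ):ℕ∞) from by push_cast; ring, Nat.cast_lt] at hi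
      rcases Nat.even_or_odd i with ⟨j, rfl⟩ | ⟨j, rfl⟩
      · rw [show j + j = 2*j from by ring] at hi ⊢
        exact iff_of_false
          (altpath_evenEdge_notN hMm hMs hNm hsupp hsW j
            (fun j' hj' => hmin j' (by omega)))
          (not_not_intro (altpath_edgeN hsupp j (hmin j (by omega))))
      · have h2 : s(f (2*(j+1)), f (2*(j+1)+1)) ∉ N :=
          altpath_evenEdge_notN hMm hMs hNm hsupp hsW (j+1)
            (fun j' hj' => hmin j' (by omega))
        rw [show 2*(j+1) = 2*j+2 from by ring] at h2
        rw [show 2*j+1+1 = 2*j+2 from by omega, show 2*j+1+2 = 2*j+2+1 from by omega]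
        exact iff_of_true (altpath_edgeN hsupp j (hmin j (by omega))) h2
    · exact_mod_cast (by omega : 1 < 2*k0+2)
    · -- end vertex unmatched
      intro m hm
      rw [show ((m:ℕ∞)+1) = ((m+1:ℕ):ℕ∞) from by push_cast; ring, Nat.cast_inj] at hm
      have hm' : m = 2*k0+1 := by omega
      subst hm'
      intro hmem
      exact hk0 (hsupp ▸ hmem)
    · -- proper
      refine ⟨1, ?_, ?_⟩
      · have hc2 : ((1:ℕ):ℕ∞) + 1 = ((2:ℕ):ℕ∞) := by push_cast; ring
        rw [hc2, Nat.cast_lt]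
        omega
      · have h := altpath_edgeN hsupp 0 (hmin 0 hk0pos)
        norm_num at h
        exact h

end PaperMatchings
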